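/- Let m ≥ 3 be an integer and let a, b : ZMod m → ℝ³ satisfy Σ_{l} a(l) = 0, Σ_{l} b(l) = 0, and ‖a(x_1) + b(x_2)‖ ≤ 1 for all x_1, x_2 ∈ ZMod m; define ρ_{x_1 x_2} = (1/2)(I + (a(x_1)+b(x_2))·σ). For y ∈ {1,2}, let m̂_y ∈ ℝ³ be a unit vector and set M_{0|y} = (1/2)(I + m̂_y·σ), M_{1|y} = (1/2)(I − m̂_y·σ), and M_{b|y} = 0 for b ∉ {0,1}. Then the (2,m) POREC success probability of this strategy equals (m−1)/m − (1/(4m))·[ m̂_1·(a(0) − a(1)) + m̂_2·(b(0) − b(1)) ]. -/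

import Mathlib

open Finset

noncomputable section

/-- Pauli matrix `σ_x`. -/
def sigmaX : Matrix (Fin 2) (Fin 2) ℂ := !![0, 1; 1, 0]

/-- Pauli matrix `σ_y`. -/
def sigmaY : Matrix (Fin 2) (Fin 2) ℂ := !![0, -Complex.I; Complex.I, 0]

/-- Pauli matrix `σ_z`. -/
def sigmaZ : Matrix (Fin 2) (Fin 2) ℂ := !![1, 0; 0, -1]

/-- `v·σ = v₁σ_x + v₂σ_y + v₃σ_z` for `v ∈ ℝ³`. -/
def dotSigma (v : EuclideanSpace ℝ (Fin 3)) : Matrix (Fin 2) (Fin 2) ℂ :=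
  v 0 • sigmaX + v 1 • sigmaY + v 2 • sigmaZ

/-- The qubit state with Bloch vector `v`: `(I + v·σ)/2`. -/
def blochState (v : EuclideanSpace ℝ (Fin 3)) : Matrix (Fin 2) (Fin 2) ℂ :=
  (1 / 2 : ℝ) • ((1 : Matrix (Fin 2) (Fin 2) ℂ) + dotSigma v)

/-- The two-outcome projective measurement along `m̂`: `M₀ = (I + m̂·σ)/2`,
`M₁ = (I − m̂·σ)/2`, and `M_b = 0` for `b ∉ {0,1}`. -/
def projMeas (m : ℕ) [NeZero m] (mhat : EuclideanSpace ℝ (Fin 3)) (b : ZMod m) :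
    Matrix (Fin 2) (Fin 2) ℂ :=
  if b = 0 then (1 / 2 : ℝ) • ((1 : Matrix (Fin 2) (Fin 2) ℂ) + dotSigma mhat)
  else if b = 1 then (1 / 2 : ℝ) • ((1 : Matrix (Fin 2) (Fin 2) ℂ) - dotSigma mhat)
  else 0

/- ### Auxiliary lemmas -/

lemma inner_coords (w v : EuclideanSpace ℝ (Fin 3)) :
    (inner ℝ w v : ℝ) = w 0 * v 0 + w 1 * v 1 + w 2 * v 2 := by
  simp [PiLp.inner_apply, Fin.sum_univ_three, RCLike.inner_apply, mul_comm]

lemma trace_plus (v w : EuclideanSpace ℝ (Fin 3)) :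
    (blochState v * ((1/2 : ℝ) • ((1 : Matrix (Fin 2) (Fin 2) ℂ) + dotSigma w))).trace.re
      = (1 + (inner ℝ w v : ℝ)) / 2 := by
  rw [inner_coords]
  simp [blochState, dotSigma, sigmaX, sigmaY, sigmaZ, Matrix.trace_fin_two,
    Matrix.mul_apply, Fin.sum_univ_two, Matrix.one_apply, Matrix.smul_apply,
    Complex.ext_iff, Complex.add_re, Complex.mul_re]
  ring

lemma trace_minus (v w : EuclideanSpace ℝ (Fin 3)) :
    (blochState v * ((1/2 : ℝ) • ((1 : Matrix (Fin 2) (Fin 2) ℂ) - dotSigma w))).trace.re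
      = (1 - (inner ℝ w v : ℝ)) / 2 := by
  rw [inner_coords]
  simp [blochState, dotSigma, sigmaX, sigmaY, sigmaZ, Matrix.trace_fin_two,
    Matrix.mul_apply, Fin.sum_univ_two, Matrix.one_apply, Matrix.smul_apply,
    Complex.ext_iff, Complex.add_re, Complex.mul_re, sub_eq_add_neg]
  ring

lemma trace_proj (m : ℕ) [NeZero m] (mhat v : EuclideanSpace ℝ (Fin 3)) (c : ZMod m) :
    (blochState v * projMeas m mhat c).trace.re
      = if c = 0 then (1 + (inner ℝ mhat v : ℝ)) / 2
        else if c = 1 then (1 - (inner ℝ mhat v : ℝ)) / 2 else 0 := by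
  unfold projMeas
  split_ifs with h0 h1
  · exact trace_plus v mhat
  · exact trace_minus v mhat
  · simp

lemma sum_filter_ne_eq (m : ℕ) [NeZero m] (hm : 3 ≤ m) (g : ZMod m → ℝ) (p q : ℝ)
    (hg : ∀ c, g c = if c = 0 then p else if c = 1 then q else 0) (x : ZMod m) :
    ∑ c ∈ Finset.univ.filter (fun c => c ≠ x), g c = p + q - g x := by
  haveI : Fact (1 < m) := ⟨by omega⟩
  have h01 : (1 : ZMod m) ≠ 0 := one_ne_zero
  have hsplit : ∀ c : ZMod m, g c =
      (if c = 0 then p else 0) + (if c = 1 then q else 0) := by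
    intro c
    by_cases h0 : c = 0 <;> by_cases h1 : c = 1 <;> simp_all [hg]
  have htot : ∑ c : ZMod m, g c = p + q := by
    simp [hsplit, Finset.sum_add_distrib]
  rw [Finset.filter_ne', Finset.sum_erase_eq_sub (Finset.mem_univ x), htot]

lemma double_sum_eval (m : ℕ) [NeZero m] (hm : 3 ≤ m)
    (f g : ZMod m → EuclideanSpace ℝ (Fin 3))
    (mh : EuclideanSpace ℝ (Fin 3)) (hg : ∑ l : ZMod m, g l = 0) :
    ∑ x1 : ZMod m, ∑ x2 : ZMod m,
      (if x1 = 0 then (1 + (inner ℝ mh (f x1 + g x2) : ℝ)) / 2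
       else if x1 = 1 then (1 - (inner ℝ mh (f x1 + g x2) : ℝ)) / 2 else 0)
    = m + (m : ℝ) / 2 * (inner ℝ mh (f 0 - f 1) : ℝ) := by
  haveI : Fact (1 < m) := ⟨by omega⟩
  have h01 : (0 : ZMod m) ≠ 1 := fun h => one_ne_zero h.symm
  have hse : ∑ x2 : ZMod m, (inner ℝ mh (g x2) : ℝ) = 0 := by
    rw [← inner_sum, hg, inner_zero_right]
  have hcard : (Fintype.card (ZMod m) : ℝ) = m := by rw [ZMod.card]
  have hstep : ∀ x1 : ZMod m, (∑ x2 : ZMod m,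
      (if x1 = 0 then (1 + (inner ℝ mh (f x1 + g x2) : ℝ)) / 2
       else if x1 = 1 then (1 - (inner ℝ mh (f x1 + g x2) : ℝ)) / 2 else 0))
    = (if x1 = 0 then (m + m * (inner ℝ mh (f 0) : ℝ)) / 2 else 0)
      + (if x1 = 1 then (m - m * (inner ℝ mh (f 1) : ℝ)) / 2 else 0) := by
    intro x1
    by_cases h0 : x1 = 0
    · subst h0
      simp only [if_pos rfl, if_neg h01, add_zero]
      calc ∑ x2 : ZMod m, (1 + (inner ℝ mh (f 0 + g x2) : ℝ)) / 2
          = ∑ x2 : ZMod m, ((1 + (inner ℝ mh (f 0) : ℝ)) / 2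
              + (inner ℝ mh (g x2) : ℝ) * (1 / 2)) := by
            refine Finset.sum_congr rfl fun x2 _ => ?_
            rw [inner_add_right]; ring
        _ = (Fintype.card (ZMod m) : ℝ) * ((1 + (inner ℝ mh (f 0) : ℝ)) / 2)
              + (∑ x2 : ZMod m, (inner ℝ mh (g x2) : ℝ)) * (1 / 2) := by
            rw [Finset.sum_add_distrib, Finset.sum_const, ← Finset.sum_mul]
            simp [nsmul_eq_mul, Finset.card_univ]
        _ = ((m : ℝ) + m * (inner ℝ mh (f 0) : ℝ)) / 2 := by
            rw [hse, hcard]; ring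
    · by_cases h1 : x1 = 1
      · subst h1
        simp only [if_neg h0, if_pos rfl, zero_add]
        calc ∑ x2 : ZMod m, (1 - (inner ℝ mh (f 1 + g x2) : ℝ)) / 2
            = ∑ x2 : ZMod m, ((1 - (inner ℝ mh (f 1) : ℝ)) / 2
                - (inner ℝ mh (g x2) : ℝ) * (1 / 2)) := by
              refine Finset.sum_congr rfl fun x2 _ => ?_
              rw [inner_add_right]; ring
          _ = (Fintype.card (ZMod m) : ℝ) * ((1 - (inner ℝ mh (f 1) : ℝ)) / 2)
                - (∑ x2 : ZMod m, (inner ℝ mh (g x2) : ℝ)) * (1 / 2) := by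
              rw [Finset.sum_sub_distrib, Finset.sum_const, ← Finset.sum_mul]
              simp [nsmul_eq_mul, Finset.card_univ]
          _ = ((m : ℝ) - m * (inner ℝ mh (f 1) : ℝ)) / 2 := by
              rw [hse, hcard]; ring
      · simp [h0, h1]
  rw [Finset.sum_congr rfl fun x1 _ => hstep x1, Finset.sum_add_distrib]
  rw [Finset.sum_ite_eq' Finset.univ (0 : ZMod m), Finset.sum_ite_eq' Finset.univ (1 : ZMod m)]
  rw [inner_sub_right]
  simp only [Finset.mem_univ, if_true]
  ring

/-- **Reduction of the (2,m) POREC success probability for projective measurements.**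
For additive zero-sum Bloch preparations `ρ_{x₁x₂} = (I + (a(x₁)+b(x₂))·σ)/2` within the
Bloch ball and two-outcome projective measurements along unit vectors `m̂₁, m̂₂`, the POREC
success probability equals
`(m−1)/m − (1/(4m))·[m̂₁·(a(0)−a(1)) + m̂₂·(b(0)−b(1))]`. -/
theorem porec2m_success_eq_projective
    (m : ℕ) (hm : 3 ≤ m) [NeZero m]
    (a b : ZMod m → EuclideanSpace ℝ (Fin 3))
    (ha_sum : ∑ l : ZMod m, a l = 0) (hb_sum : ∑ l : ZMod m, b l = 0)
    (hball : ∀ x₁ x₂ : ZMod m, ‖a x₁ + b x₂‖ ≤ 1)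
    (mhat₁ mhat₂ : EuclideanSpace ℝ (Fin 3))
    (hm₁_unit : ‖mhat₁‖ = 1) (hm₂_unit : ‖mhat₂‖ = 1) :
    (1 / (2 * (m : ℝ) ^ 2)) *
        ∑ x : ZMod m × ZMod m,
          ((∑ c ∈ Finset.univ.filter (fun c => c ≠ x.1),
              ((blochState (a x.1 + b x.2) * projMeas m mhat₁ c).trace.re)) +
           (∑ c ∈ Finset.univ.filter (fun c => c ≠ x.2),
              ((blochState (a x.1 + b x.2) * projMeas m mhat₂ c).trace.re)))
      = ((m : ℝ) - 1) / m -
        (1 / (4 * (m : ℝ))) *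
          ((inner ℝ mhat₁ (a 0 - a 1) : ℝ) + (inner ℝ mhat₂ (b 0 - b 1) : ℝ)) := by
  have hm0 : (m : ℝ) ≠ 0 := Nat.cast_ne_zero.mpr (by omega)
  have hfilter : ∀ (mh v : EuclideanSpace ℝ (Fin 3)) (x : ZMod m),
      ∑ c ∈ Finset.univ.filter (fun c => c ≠ x),
        ((blochState v * projMeas m mh c).trace.re)
      = 1 - (blochState v * projMeas m mh x).trace.re := by
    intro mh v x
    have h := sum_filter_ne_eq m hm
      (fun c => (blochState v * projMeas m mh c).trace.re)
      ((1 + (inner ℝ mh v : ℝ)) / 2) ((1 - (inner ℝ mh v : ℝ)) / 2)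
      (fun c => trace_proj m mh v c) x
    rw [h]; ring_nf
  -- rewrite every bracket
  have hmain : ∑ x : ZMod m × ZMod m,
      ((∑ c ∈ Finset.univ.filter (fun c => c ≠ x.1),
          ((blochState (a x.1 + b x.2) * projMeas m mhat₁ c).trace.re)) +
       (∑ c ∈ Finset.univ.filter (fun c => c ≠ x.2),
          ((blochState (a x.1 + b x.2) * projMeas m mhat₂ c).trace.re)))
    = ∑ x : ZMod m × ZMod m,
        (2 - (blochState (a x.1 + b x.2) * projMeas m mhat₁ x.1).trace.re
           - (blochState (a x.1 + b x.2) * projMeas m mhat₂ x.2).trace.re) := by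
    refine Finset.sum_congr rfl fun x _ => ?_
    rw [hfilter mhat₁ _ x.1, hfilter mhat₂ _ x.2]; ring
  rw [hmain]
  have hcard : (Fintype.card (ZMod m × ZMod m) : ℝ) = (m : ℝ) ^ 2 := by
    simp [Fintype.card_prod, ZMod.card]; ring
  have hS1 : ∑ x : ZMod m × ZMod m,
      (blochState (a x.1 + b x.2) * projMeas m mhat₁ x.1).trace.re
    = m + (m : ℝ) / 2 * (inner ℝ mhat₁ (a 0 - a 1) : ℝ) := by
    rw [Fintype.sum_prod_type]
    simp only [trace_proj]
    exact double_sum_eval m hm a b mhat₁ hb_sum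
  have hS2 : ∑ x : ZMod m × ZMod m,
      (blochState (a x.1 + b x.2) * projMeas m mhat₂ x.2).trace.re
    = m + (m : ℝ) / 2 * (inner ℝ mhat₂ (b 0 - b 1) : ℝ) := by
    rw [Fintype.sum_prod_type_right]
    simp only [trace_proj]
    have := double_sum_eval m hm b a mhat₂ ha_sum
    simp only [show ∀ x1 x2 : ZMod m, a x1 + b x2 = b x2 + a x1 from
      fun _ _ => add_comm _ _]
    exact this
  rw [Finset.sum_sub_distrib, Finset.sum_sub_distrib, Finset.sum_const,
    Finset.card_univ, hS1, hS2]
  have : ((Fintype.card (ZMod m × ZMod m)) • (2 : ℝ)) = 2 * (m : ℝ) ^ 2 := by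
    rw [nsmul_eq_mul, hcard]; ring
  rw [this]
  field_simp
  ring
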